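/- Let P ∈ M_N(ℂ) be a nonzero orthogonal projection, let F_1,…,F_n ∈ M_N(ℂ) be unitary matrices satisfying P F_j† F_i P = δ_{ji} P for all i, j, let η_1,…,η_n ∈ {+1,−1} with η_l = −1 for at least one index l, and let ρ ∈ M_N(ℂ) be positive semidefinite with P ρ P ≠ 0. Then the output matrix Σ_{i=1}^n η_i · F_i (P ρ P) F_i† is not positive semidefinite; that is, there exists a vector v ∈ ℂ^N with v† (Σ_i η_i F_i (PρP) F_i†) v < 0. -/

import Mathlib

open Matrix ComplexOrder

/-- **Corollary 1.** If the `F i` are unitary, satisfy `P (F j)ᴴ (F i) P = δⱼᵢ P`, at least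
one sign `η l` is `-1`, and `ρ` is positive semidefinite with `P ρ P ≠ 0`, then the output
`∑ i, η i • F i (P ρ P) (F i)ᴴ` is not positive semidefinite: some vector `v` gives a negative
expectation value `v† M v < 0`. -/
theorem stmt_2 {N n : ℕ} (P : Matrix (Fin N) (Fin N) ℂ)
    (hP : P ≠ 0) (hProj : P * P = P) (hPH : Pᴴ = P)
    (F : Fin n → Matrix (Fin N) (Fin N) ℂ)
    (hFunitary : ∀ i, F i ∈ Matrix.unitaryGroup (Fin N) ℂ)
    (hQEC : ∀ i j, P * (F j)ᴴ * F i * P = if j = i then P else 0)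
    (η : Fin n → ℝ) (hη : ∀ i, η i = 1 ∨ η i = -1)
    (hneg : ∃ l, η l = -1)
    (ρ : Matrix (Fin N) (Fin N) ℂ) (hρ : ρ.PosSemidef)
    (hPρP : P * ρ * P ≠ 0) :
    ∃ v : Fin N → ℂ,
      star v ⬝ᵥ (∑ i, (η i : ℂ) • (F i * (P * ρ * P) * (F i)ᴴ)).mulVec v < 0 := by
  obtain ⟨l, hl⟩ := hneg
  have hσ : (P * ρ * P).PosSemidef := by
    have h := hρ.mul_mul_conjTranspose_same P
    rwa [hPH] at h
  have hu : ∃ u : Fin N → ℂ, 0 < star u ⬝ᵥ (P * ρ * P) *ᵥ u := by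
    by_contra h
    push_neg at h
    apply hPρP
    have hz : ∀ u, (P * ρ * P) *ᵥ u = 0 := by
      intro u
      rw [← hσ.dotProduct_mulVec_zero_iff]
      exact (((hσ.dotProduct_mulVec_nonneg u).lt_or_eq).resolve_left (h u)).symm
    ext i j
    have := congrFun (hz (Pi.single j 1)) i
    simpa [mulVec_single] using this
  obtain ⟨u, hu⟩ := hu
  refine ⟨(F l * P) *ᵥ u, ?_⟩
  have hquad : ∀ (A B : Matrix (Fin N) (Fin N) ℂ) (w : Fin N → ℂ),
      star (B *ᵥ w) ⬝ᵥ A *ᵥ (B *ᵥ w) = star w ⬝ᵥ (Bᴴ * A * B) *ᵥ w := by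
    intro A B w
    simp [star_mulVec, dotProduct_mulVec, vecMul_vecMul, Matrix.mul_assoc]
  rw [show (∑ i, (η i : ℂ) • (F i * (P * ρ * P) * (F i)ᴴ)).mulVec ((F l * P) *ᵥ u)
      = (∑ i, (η i : ℂ) • (F i * (P * ρ * P) * (F i)ᴴ)) *ᵥ ((F l * P) *ᵥ u) from rfl,
    hquad]
  have hkey : (F l * P)ᴴ * (∑ i, (η i : ℂ) • (F i * (P * ρ * P) * (F i)ᴴ)) * (F l * P)
      = -(P * ρ * P) := by
    rw [conjTranspose_mul, hPH, Finset.mul_sum, Finset.sum_mul]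
    have hterm : ∀ i, (P * (F l)ᴴ * ((η i : ℂ) • (F i * (P * ρ * P) * (F i)ᴴ))) * (F l * P)
        = (η i : ℂ) • ((P * (F l)ᴴ * F i * P) * ρ * (P * (F i)ᴴ * F l * P)) := by
      intro i
      rw [mul_smul_comm, smul_mul_assoc]
      congr 1
      simp only [Matrix.mul_assoc]
    calc (∑ i, (P * (F l)ᴴ * ((η i : ℂ) • (F i * (P * ρ * P) * (F i)ᴴ))) * (F l * P))
        = ∑ i, (η i : ℂ) • ((if l = i then P else 0) * ρ * (if i = l then P else 0)) := by
          refine Finset.sum_congr rfl fun i _ => ?_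
          rw [hterm, hQEC i l, hQEC l i]
      _ = -(P * ρ * P) := by
          rw [Finset.sum_eq_single l]
          · simp [hl]
          · intro i _ hi
            simp [hi, Ne.symm hi]
          · simp
  rw [hkey, neg_mulVec, dotProduct_neg]
  exact neg_neg_of_pos hu
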